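/- Let X, Y be real Banach spaces, Z a closed subspace of Y, T : X → Y bounded linear, and suppose y* ∈ Z^⊥ ⊆ Y* with ‖y*‖ = 1, and x** ∈ X** with ‖x**‖ = 1 satisfies x**(T* y*) = ‖T‖. Then ‖T** x**‖ = ‖T**‖ and T** x** is Birkhoff-James orthogonal to Z^{⊥⊥} ⊆ Y**, i.e., ‖T**x** + u‖ ≥ ‖T**x**‖ for all u ∈ Z^{⊥⊥}. -/

import Mathlib

open NormedSpace

theorem stmt_7
    {X Y : Type*} [NormedAddCommGroup X] [NormedSpace ℝ X] [CompleteSpace X]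
    [NormedAddCommGroup Y] [NormedSpace ℝ Y] [CompleteSpace Y]
    (Z : Subspace ℝ Y) (hZ : IsClosed (Z : Set Y))
    (T : X →L[ℝ] Y)
    (T2 : StrongDual ℝ (StrongDual ℝ X) →L[ℝ] StrongDual ℝ (StrongDual ℝ Y))
    (hT2 : ∀ (ξ : StrongDual ℝ (StrongDual ℝ X)) (g : StrongDual ℝ Y), T2 ξ g = ξ (g.comp T))
    (g : StrongDual ℝ Y) (hg : ‖g‖ = 1) (hgZ : ∀ z ∈ Z, g z = 0)
    (xss : StrongDual ℝ (StrongDual ℝ X)) (hxss : ‖xss‖ = 1)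
    (hnorm : xss (g.comp T) = ‖T‖) :
    ‖T2 xss‖ = @Norm.norm _ (@ContinuousLinearMap.hasOpNorm ℝ ℝ (StrongDual ℝ (StrongDual ℝ X))
        (StrongDual ℝ (StrongDual ℝ Y)) _ _ _ _ _ _ (RingHom.id ℝ)) T2 ∧
      ∀ u : StrongDual ℝ (StrongDual ℝ Y),
        (∀ h : StrongDual ℝ Y, (∀ z ∈ Z, h z = 0) → u h = 0) →
        ‖T2 xss + u‖ ≥ ‖T2 xss‖ := by
  letI : Norm (StrongDual ℝ (StrongDual ℝ X) →L[ℝ] StrongDual ℝ (StrongDual ℝ Y)) :=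
    @ContinuousLinearMap.hasOpNorm ℝ ℝ (StrongDual ℝ (StrongDual ℝ X))
      (StrongDual ℝ (StrongDual ℝ Y)) _ _ _ _ _ _ (RingHom.id ℝ)
  have hTle : ‖T2‖ ≤ ‖T‖ := by
    apply ContinuousLinearMap.opNorm_le_bound _ (norm_nonneg T)
    intro ξ
    apply ContinuousLinearMap.opNorm_le_bound _ (by positivity)
    intro h
    rw [hT2]
    calc ‖ξ (h.comp T)‖ ≤ ‖ξ‖ * ‖h.comp T‖ := ξ.le_opNorm _
      _ ≤ ‖ξ‖ * (‖h‖ * ‖T‖) := by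
          gcongr; exact ContinuousLinearMap.opNorm_comp_le _ _
      _ = ‖T‖ * ‖ξ‖ * ‖h‖ := by ring
  have hTge : ‖T‖ ≤ ‖T2 xss‖ := by
    calc ‖T‖ = ‖(T2 xss) g‖ := by rw [hT2, hnorm, Real.norm_eq_abs,
          abs_of_nonneg (norm_nonneg T)]
      _ ≤ ‖T2 xss‖ * ‖g‖ := (T2 xss).le_opNorm g
      _ = ‖T2 xss‖ := by rw [hg, mul_one]
  have hle : ‖T2 xss‖ ≤ ‖T2‖ := by
    calc ‖T2 xss‖ ≤ ‖T2‖ * ‖xss‖ := @ContinuousLinearMap.le_opNorm ℝ ℝ (StrongDual ℝ (StrongDual ℝ X))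
          (StrongDual ℝ (StrongDual ℝ Y)) ContinuousLinearMap.toSeminormedAddCommGroup
          ContinuousLinearMap.toSeminormedAddCommGroup _ _ ContinuousLinearMap.toNormedSpace
          ContinuousLinearMap.toNormedSpace (RingHom.id ℝ) _ T2 xss
      _ = ‖T2‖ := by rw [hxss, mul_one]
  have heq : ‖T2 xss‖ = ‖T2‖ := le_antisymm hle (le_trans hTle hTge)
  refine ⟨heq, ?_⟩
  intro u hu
  have hug : u g = 0 := hu g hgZ
  calc ‖T2 xss‖ = ‖T‖ := le_antisymm (le_trans hle hTle) hTge
    _ = ‖(T2 xss + u) g‖ := by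
        simp [hT2, hnorm, hug, Real.norm_eq_abs, abs_of_nonneg (norm_nonneg T)]
    _ ≤ ‖T2 xss + u‖ * ‖g‖ := (T2 xss + u).le_opNorm g
    _ = ‖T2 xss + u‖ := by rw [hg, mul_one]
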